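/- Let ℋ be a complex Hilbert space with inner product ⟨·,·⟩ linear in the second variable. Let H be a linear map with domain D(H) ⊆ ℋ, let 𝒟₁, 𝒟₂, 𝒟, ℰ be subspaces of ℋ with ℰ ⊆ 𝒟 ⊆ 𝒟₁ ∩ 𝒟₂, ℰ ⊆ D(H), H(ℰ) ⊆ 𝒟₁, and suppose H is symmetric on ℰ, i.e. ⟨Hφ,ψ⟩ = ⟨φ,Hψ⟩ for all φ,ψ ∈ ℰ. Let 𝔱 : 𝒟₁ × 𝒟₂ → ℂ be sesquilinear (antilinear in the first argument, linear in the second), symmetric on 𝒟 (conj(𝔱[φ,ψ]) = 𝔱[ψ,φ] for φ,ψ ∈ 𝒟), and satisfy the ultra-weak CCR: 𝔱[Hφ,ψ] − conj(𝔱[Hψ,φ]) = −i⟨φ,ψ⟩ for all φ,ψ ∈ ℰ. Then for all real numbers a, b and every ψ ∈ ℰ with ‖ψ‖ = 1, |𝔱[Hψ − bψ, ψ] − a⟨Hψ − bψ, ψ⟩| ≥ 1/2. -/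

import Mathlib

open scoped InnerProductSpace ComplexConjugate

/-- uncertainty relation for an ultra-weak time operator `𝔱` of `H`:
`|(𝔱 - a)[(H - b)ψ, ψ]| ≥ 1/2` for unit vectors `ψ` in the ultra-weak CCR-domain `ℰ`. -/
theorem ultra_weak_time_operator_uncertainty
    {ℋ : Type*} [NormedAddCommGroup ℋ] [InnerProductSpace ℂ ℋ]
    (H : ℋ →ₗ.[ℂ] ℋ) (𝒟₁ 𝒟₂ 𝒟 ℰ : Submodule ℂ ℋ)
    (h𝒟1 : 𝒟 ≤ 𝒟₁) (h𝒟2 : 𝒟 ≤ 𝒟₂) (hℰ𝒟 : ℰ ≤ 𝒟) (hℰH : ℰ ≤ H.domain)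
    (t : 𝒟₁ → 𝒟₂ → ℂ)
    -- sesquilinearity: antilinear in the first argument, linear in the second
    (haddl : ∀ (φ φ' : 𝒟₁) (ψ : 𝒟₂), t (φ + φ') ψ = t φ ψ + t φ' ψ)
    (hsmull : ∀ (c : ℂ) (φ : 𝒟₁) (ψ : 𝒟₂), t (c • φ) ψ = conj c * t φ ψ)
    (haddr : ∀ (φ : 𝒟₁) (ψ ψ' : 𝒟₂), t φ (ψ + ψ') = t φ ψ + t φ ψ')
    (hsmulr : ∀ (c : ℂ) (φ : 𝒟₁) (ψ : 𝒟₂), t φ (c • ψ) = c * t φ ψ)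
    -- symmetry on 𝒟
    (hsymm : ∀ (φ ψ : ℋ) (hφ : φ ∈ 𝒟) (hψ : ψ ∈ 𝒟),
      conj (t ⟨φ, h𝒟1 hφ⟩ ⟨ψ, h𝒟2 hψ⟩) = t ⟨ψ, h𝒟1 hψ⟩ ⟨φ, h𝒟2 hφ⟩)
    -- H is symmetric on ℰ
    (hHsymm : ∀ (φ ψ : ℋ) (hφ : φ ∈ ℰ) (hψ : ψ ∈ ℰ),
      ⟪H ⟨φ, hℰH hφ⟩, ψ⟫_ℂ = ⟪φ, H ⟨ψ, hℰH hψ⟩⟫_ℂ)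
    (hHE : ∀ (ψ : ℋ) (hψ : ψ ∈ ℰ), H ⟨ψ, hℰH hψ⟩ ∈ 𝒟₁)
    -- ultra-weak CCR
    (hccr : ∀ (φ ψ : ℋ) (hφ : φ ∈ ℰ) (hψ : ψ ∈ ℰ),
      t ⟨H ⟨φ, hℰH hφ⟩, hHE φ hφ⟩ ⟨ψ, h𝒟2 (hℰ𝒟 hψ)⟩
        - conj (t ⟨H ⟨ψ, hℰH hψ⟩, hHE ψ hψ⟩ ⟨φ, h𝒟2 (hℰ𝒟 hφ)⟩)
        = (-Complex.I) * ⟪φ, ψ⟫_ℂ)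
    (a b : ℝ) (ψ : ℋ) (hψ : ψ ∈ ℰ) (hnorm : ‖ψ‖ = 1) :
    1 / 2 ≤ ‖
      (t ⟨H ⟨ψ, hℰH hψ⟩ - (b : ℂ) • ψ,
            𝒟₁.sub_mem (hHE ψ hψ) (𝒟₁.smul_mem _ (h𝒟1 (hℰ𝒟 hψ)))⟩
          ⟨ψ, h𝒟2 (hℰ𝒟 hψ)⟩
        - (a : ℂ) * ⟪H ⟨ψ, hℰH hψ⟩ - (b : ℂ) • ψ, ψ⟫_ℂ)‖ := by
  set u : ℂ := t ⟨H ⟨ψ, hℰH hψ⟩, hHE ψ hψ⟩ ⟨ψ, h𝒟2 (hℰ𝒟 hψ)⟩ with hu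
  set s : ℂ := t ⟨ψ, h𝒟1 (hℰ𝒟 hψ)⟩ ⟨ψ, h𝒟2 (hℰ𝒟 hψ)⟩ with hs
  set w : ℂ := ⟪H ⟨ψ, hℰH hψ⟩, (ψ : ℋ)⟫_ℂ with hw
  have hinner1 : ⟪ψ, ψ⟫_ℂ = 1 := by
    rw [inner_self_eq_norm_sq_to_K, hnorm]; norm_num
  have hsconj : conj s = s := hsymm ψ ψ (hℰ𝒟 hψ) (hℰ𝒟 hψ)
  have hwconj : conj w = w := by
    rw [hw, inner_conj_symm, ← hHsymm ψ ψ hψ hψ]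
  have hccr' : u - conj u = -Complex.I := by
    have := hccr ψ ψ hψ hψ
    rwa [hinner1, mul_one] at this
  -- split the first argument of t
  have hsplit : (⟨H ⟨ψ, hℰH hψ⟩ - (b : ℂ) • ψ,
        𝒟₁.sub_mem (hHE ψ hψ) (𝒟₁.smul_mem _ (h𝒟1 (hℰ𝒟 hψ)))⟩ : 𝒟₁)
      = ⟨H ⟨ψ, hℰH hψ⟩, hHE ψ hψ⟩ + (-(b:ℂ)) • ⟨ψ, h𝒟1 (hℰ𝒟 hψ)⟩ := by
    apply Subtype.ext
    simp [sub_eq_add_neg, neg_smul]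
  have hT : t ⟨H ⟨ψ, hℰH hψ⟩ - (b : ℂ) • ψ,
        𝒟₁.sub_mem (hHE ψ hψ) (𝒟₁.smul_mem _ (h𝒟1 (hℰ𝒟 hψ)))⟩
        ⟨ψ, h𝒟2 (hℰ𝒟 hψ)⟩ = u - (b:ℂ) * s := by
    rw [hsplit, haddl, hsmull]
    simp [hu, hs]
    ring
  have hinnersub : ⟪H ⟨ψ, hℰH hψ⟩ - (b : ℂ) • ψ, ψ⟫_ℂ = w - (b:ℂ) := by
    rw [inner_sub_left, inner_smul_left, hinner1]
    simp [hw]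
  rw [hT, hinnersub]
  set z : ℂ := u - (b:ℂ) * s - (a:ℂ) * (w - (b:ℂ)) with hz
  have him : z - conj z = -Complex.I := by
    rw [hz]
    simp only [map_sub, map_mul, hsconj, hwconj, Complex.conj_ofReal]
    rw [show u - (b:ℂ)*s - (a:ℂ)*(w - (b:ℂ)) - (conj u - (b:ℂ)*s - (a:ℂ)*(w - (b:ℂ)))
        = u - conj u by ring, hccr']
  have himz : z.im = -(1/2 : ℝ) := by
    have := congrArg Complex.im him
    simp [Complex.sub_im, Complex.conj_im] at this
    linarith
  calc (1:ℝ)/2 = |z.im| := by rw [himz, abs_neg, abs_of_pos]; norm_num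
    _ ≤ ‖z‖ := Complex.abs_im_le_norm z
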